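/- Let X be a measurable space, μ a probability measure on X, f : X → {0,1} a measurable function, and p = μ({x : f(x) = 1}). For natural numbers 1 ≤ k ≤ n, the integral over x = (x₁,...,xₙ) ∈ Xⁿ, with respect to the n-fold product measure μⁿ, of ρ(n, c(x), k) equals 1 − (1−p)^k, where c(x) = #{i : f(xᵢ) = 1}. In other words, ρ(n, c, k) is an unbiased estimator of pass@k. -/

import Mathlib

open MeasureTheory

lemma choose_eq_sum_prod (n k : ℕ) (b : Fin n → Bool) :
    ((n - (Finset.univ.filter fun i => b i = true).card).choose k : ℝ)
      = ∑ S ∈ Finset.powersetCard k (Finset.univ : Finset (Fin n)),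
          ∏ i, (if i ∈ S then (if b i = false then (1:ℝ) else 0) else 1) := by
  classical
  set F : Finset (Fin n) := Finset.univ.filter (fun i => b i = false) with hF
  have hcard : F.card = n - (Finset.univ.filter fun i => b i = true).card := by
    have h1 : (Finset.univ.filter fun i => b i = true).card
        + (Finset.univ.filter fun i => ¬ (b i = true)).card = n := by
      rw [Finset.card_filter_add_card_filter_not]
      simp
    have h2 : F = Finset.univ.filter (fun i => ¬ (b i = true)) := by
      simp [hF, Bool.not_eq_true]
    rw [h2]; omega
  calc ((n - (Finset.univ.filter fun i => b i = true).card).choose k : ℝ)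
      = ((F.powersetCard k).card : ℝ) := by rw [Finset.card_powersetCard, hcard]
    _ = (((Finset.powersetCard k (Finset.univ : Finset (Fin n))).filter
          (fun S => S ⊆ F)).card : ℝ) := by
        congr 1
        congr 1
        ext S
        simp [Finset.mem_powersetCard, Finset.mem_filter, and_comm]
    _ = ∑ S ∈ Finset.powersetCard k (Finset.univ : Finset (Fin n)),
          (if S ⊆ F then (1:ℝ) else 0) := by rw [Finset.sum_boole]
    _ = _ := by
        refine Finset.sum_congr rfl fun S _ => ?_
        rw [Finset.prod_ite_mem, Finset.univ_inter, Finset.prod_boole]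
        congr 1
        simp [Finset.subset_iff, hF]

/-- ρ(n, c, k) = 1 − C(n−c,k)/C(n,k) is an unbiased estimator of
pass@k = 1 − (1−p)^k, where c(x) = #{i : f(xᵢ) = 1} for x ∈ Xⁿ distributed
according to the n-fold product of the probability measure μ, and
p = μ({x : f(x) = 1}). -/
theorem rho_unbiased_passk {X : Type*} [MeasurableSpace X] (μ : Measure X)
    [IsProbabilityMeasure μ] (f : X → Bool) (hf : Measurable f)
    (n k : ℕ) (hk : 1 ≤ k) (hkn : k ≤ n)
    (p : ℝ) (hp : p = (μ {x | f x = true}).toReal) :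
    ∫ x : Fin n → X,
        (1 - ((n - (Finset.univ.filter fun i => f (x i) = true).card).choose k : ℝ)
              / (n.choose k : ℝ))
      ∂(Measure.pi fun _ : Fin n => μ)
      = 1 - (1 - p) ^ k := by
  classical
  letI : MeasureSpace X := ⟨μ⟩
  haveI : IsProbabilityMeasure (volume : Measure X) := ‹IsProbabilityMeasure μ›
  have hμ : (Measure.pi fun _ : Fin n => μ) = (volume : Measure (Fin n → X)) := by
    rw [volume_pi]; rfl
  rw [hμ]
  have hmeas : MeasurableSet {y : X | f y = false} := hf (measurableSet_singleton false)
  set g : X → ℝ := fun y => if f y = false then (1:ℝ) else 0 with hgdef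
  have hgind : g = Set.indicator {y : X | f y = false} (fun _ => 1) := by
    funext y
    by_cases h : f y = false <;> simp [hgdef, h, Set.indicator]
  have hgint : Integrable g (volume : Measure X) := by
    rw [hgind]
    exact (integrable_const (1:ℝ)).indicator hmeas
  have hcompl : {y : X | f y = false} = {y : X | f y = true}ᶜ := by
    ext y; simp [Bool.not_eq_true]
  have hgI : ∫ y, g y = 1 - p := by
    have hμtrue : (volume : Measure X) {y : X | f y = true} = μ {x | f x = true} := rfl
    rw [hgind, integral_indicator_const _ hmeas, hcompl, measureReal_def,
      prob_compl_eq_one_sub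
        (show MeasurableSet {y : X | f y = true} from hf (measurableSet_singleton true)),
      ENNReal.toReal_sub_of_le prob_le_one (by simp), hμtrue]
    simp [hp]
  -- factor functions
  have hfac : ∀ (S : Finset (Fin n)) (i : Fin n),
      Integrable (fun y : X => if i ∈ S then g y else 1) (volume : Measure X) := by
    intro S i
    by_cases h : i ∈ S <;> simp only [h, if_true, if_false]
    · exact hgint
    · exact integrable_const 1
  have hSint : ∀ S ∈ Finset.powersetCard k (Finset.univ : Finset (Fin n)),
      Integrable (fun x : Fin n → X => ∏ i, if i ∈ S then g (x i) else 1)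
        (volume : Measure (Fin n → X)) := by
    intro S _
    exact Integrable.fintype_prod (f := fun i y => if i ∈ S then g y else 1) (hfac S)
  have key : ∀ x : Fin n → X,
      (1 - ((n - (Finset.univ.filter fun i => f (x i) = true).card).choose k : ℝ)
            / (n.choose k : ℝ))
      = 1 - (n.choose k : ℝ)⁻¹ *
          ∑ S ∈ Finset.powersetCard k (Finset.univ : Finset (Fin n)),
            ∏ i, (if i ∈ S then g (x i) else 1) := by
    intro x
    rw [show (fun S => ∏ i, (if i ∈ S then g (x i) else 1))
        = (fun S => ∏ i, (if i ∈ S then (if f (x i) = false then (1:ℝ) else 0) else 1))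
        from rfl, ← choose_eq_sum_prod n k (fun i => f (x i))]
    ring
  simp_rw [key]
  rw [integral_sub (integrable_const 1)
    (((integrable_finset_sum _ hSint).const_mul _)), integral_const,
    integral_const_mul, integral_finset_sum _ hSint]
  have hterm : ∀ S ∈ Finset.powersetCard k (Finset.univ : Finset (Fin n)),
      (∫ x : Fin n → X, ∏ i, (if i ∈ S then g (x i) else 1)) = (1 - p) ^ k := by
    intro S hS
    rw [integral_fintype_prod_volume_eq_prod (fun i y => if i ∈ S then g y else 1)]
    have : ∀ i : Fin n, (∫ y : X, if i ∈ S then g y else 1)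
        = (if i ∈ S then (1 - p) else 1) := by
      intro i
      by_cases h : i ∈ S <;> simp only [h, if_true, if_false]
      · exact hgI
      · simp
    rw [Finset.prod_congr rfl (fun i _ => this i), Finset.prod_ite_mem,
      Finset.univ_inter, Finset.prod_const,
      (Finset.mem_powersetCard.mp hS).2]
  rw [Finset.sum_congr rfl hterm, Finset.sum_const, Finset.card_powersetCard,
    Finset.card_univ, Fintype.card_fin]
  have hc : ((n.choose k : ℝ)) ≠ 0 :=
    Nat.cast_ne_zero.mpr (Nat.choose_pos hkn).ne'
  simp only [measureReal_def, measure_univ, ENNReal.toReal_one, one_smul, smul_eq_mul]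
  rw [nsmul_eq_mul, ← mul_assoc, inv_mul_cancel₀ hc, one_mul, one_mul]
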